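/- The probability of a measurement outcome deviates by at most half the trace distance: let M be a complex d × d matrix with I − MᴴM positive semidefinite, and let ρ and σ be density matrices. Then |tr(M·ρ·Mᴴ) − tr(M·σ·Mᴴ)| ≤ (1/2)·‖ρ − σ‖₁, where both traces are real numbers. -/

import Mathlib

open Matrix
open scoped ComplexOrder

/-- The trace norm of a complex square matrix: the trace of the positive
semidefinite square root of `Aᴴ * A`. -/
noncomputable def traceNorm {d : Type*} [Fintype d] [DecidableEq d] (A : Matrix d d ℂ) : ℝ :=
  ((((Matrix.posSemidef_conjTranspose_mul_self A).1.eigenvectorUnitary : Matrix d d ℂ) *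
      diagonal (((↑) : ℝ → ℂ) ∘ Real.sqrt ∘ (Matrix.posSemidef_conjTranspose_mul_self A).1.eigenvalues) *
      (star (Matrix.posSemidef_conjTranspose_mul_self A).1.eigenvectorUnitary : Matrix d d ℂ)).trace).re

/-- A density matrix: positive semidefinite (hence Hermitian) with trace 1. -/
def IsDensity {d : Type*} [Fintype d] (ρ : Matrix d d ℂ) : Prop :=
  ρ.PosSemidef ∧ ρ.trace = 1

private lemma psd_trace_nonneg {d : Type*} [Fintype d] [DecidableEq d]
    {A : Matrix d d ℂ} (hA : A.PosSemidef) : 0 ≤ A.trace := by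
  have : ∀ i, 0 ≤ A i i := by
    intro i
    exact hA.diag_nonneg
  exact Finset.sum_nonneg fun i _ => this i

open scoped MatrixOrder in
private lemma psd_mul_trace_nonneg {d : Type*} [Fintype d] [DecidableEq d]
    {A B : Matrix d d ℂ} (hA : A.PosSemidef) (hB : B.PosSemidef) :
    0 ≤ (A * B).trace := by
  have h1 : A * B = CFC.sqrt A * (CFC.sqrt A * B) := by
    rw [← mul_assoc, CFC.sqrt_mul_sqrt_self A hA.nonneg]
  rw [h1, Matrix.trace_mul_comm]
  have h2 : CFC.sqrt A * B * CFC.sqrt A = (CFC.sqrt A)ᴴ * B * CFC.sqrt A := by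
    rw [(CFC.sqrt_nonneg A).posSemidef.1]
  have := hB.conjTranspose_mul_mul_same (CFC.sqrt A)
  rw [h2]
  exact psd_trace_nonneg this

open scoped MatrixOrder in
private lemma traceNorm_eq_of_sq {d : Type*} [Fintype d] [DecidableEq d]
    {A S : Matrix d d ℂ} (hS : S.PosSemidef) (h : S * S = Aᴴ * A) :
    traceNorm A = S.trace.re := by
  have hA := Matrix.posSemidef_conjTranspose_mul_self A
  have e : ((Matrix.posSemidef_conjTranspose_mul_self A).1.eigenvectorUnitary : Matrix d d ℂ) *
      diagonal (((↑) : ℝ → ℂ) ∘ Real.sqrt ∘ (Matrix.posSemidef_conjTranspose_mul_self A).1.eigenvalues) *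
      (star (Matrix.posSemidef_conjTranspose_mul_self A).1.eigenvectorUnitary : Matrix d d ℂ)
      = cfc Real.sqrt (Aᴴ * A) := by
    rw [(Matrix.posSemidef_conjTranspose_mul_self A).1.cfc_eq]
    rfl
  rw [traceNorm, e, ← cfcₙ_eq_cfc, ← CFC.sqrt_eq_real_sqrt _ hA.nonneg,
    CFC.sqrt_unique h hS.nonneg]

/-- The probability of a measurement outcome deviates by at most half the
trace distance. -/
theorem measurement_prob_deviation {d : Type*} [Fintype d] [DecidableEq d]
    (M : Matrix d d ℂ) (hM : (1 - Mᴴ * M).PosSemidef)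
    (ρ σ : Matrix d d ℂ) (hρ : IsDensity ρ) (hσ : IsDensity σ) :
    |((M * ρ * Mᴴ).trace).re - ((M * σ * Mᴴ).trace).re| ≤
      (1 / 2) * traceNorm (ρ - σ) := by
  set Δ := ρ - σ with hΔdef
  have hΔ : Δ.IsHermitian := (hρ.1.isHermitian.sub hσ.1.isHermitian)
  set U : Matrix d d ℂ := (hΔ.eigenvectorUnitary : Matrix d d ℂ) with hU
  set lam := hΔ.eigenvalues with hlam
  have hUU : U * star U = 1 := (Matrix.mem_unitaryGroup_iff).mp hΔ.eigenvectorUnitary.2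
  have hUU' : star U * U = 1 := (Matrix.mem_unitaryGroup_iff').mp hΔ.eigenvectorUnitary.2
  -- multiplication of conjugated diagonals
  have hmul : ∀ f g : d → ℂ, (U * diagonal f * star U) * (U * diagonal g * star U)
      = U * diagonal (f * g) * star U := by
    intro f g
    have h : star U * (U * diagonal g * star U) = diagonal g * star U := by
      rw [← Matrix.mul_assoc, ← Matrix.mul_assoc, hUU', one_mul]
    rw [Matrix.mul_assoc (U * diagonal f), h, ← Matrix.mul_assoc,
      Matrix.mul_assoc U, diagonal_mul_diagonal]
    rfl
  -- trace of conjugated diagonal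
  have htr : ∀ f : d → ℂ, (U * diagonal f * star U).trace = ∑ i, f i := by
    intro f
    rw [Matrix.trace_mul_cycle, hUU', one_mul, trace_diagonal]
  -- spectral decomposition
  have hspec : Δ = U * diagonal (fun i => ((lam i : ℝ) : ℂ)) * star U := hΔ.spectral_theorem
  -- PSD of conjugated diagonal with nonneg entries
  have hpsd : ∀ f : d → ℝ, (∀ i, 0 ≤ f i) →
      (U * diagonal (fun i => ((f i : ℝ) : ℂ)) * star U).PosSemidef := by
    intro f hf
    have hd : (diagonal (fun i => ((f i : ℝ) : ℂ))).PosSemidef :=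
      PosSemidef.diagonal fun i => by simpa using Complex.zero_le_real.2 (hf i)
    simpa [Matrix.star_eq_conjTranspose] using hd.mul_mul_conjTranspose_same U
  set P : Matrix d d ℂ := U * diagonal (fun i => ((max (lam i) 0 : ℝ) : ℂ)) * star U with hPdef
  set Q : Matrix d d ℂ := U * diagonal (fun i => ((max (-lam i) 0 : ℝ) : ℂ)) * star U with hQdef
  have hP : P.PosSemidef := hpsd _ fun i => le_max_right _ _
  have hQ : Q.PosSemidef := hpsd _ fun i => le_max_right _ _
  -- Δ = P - Q
  have hd : diagonal (fun i => ((max (lam i) 0 : ℝ) : ℂ))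
      - diagonal (fun i => ((max (-lam i) 0 : ℝ) : ℂ))
      = diagonal (fun i => ((lam i : ℝ) : ℂ)) := by
    have hfn : (fun i => ((max (lam i) 0 : ℝ) : ℂ) - ((max (-lam i) 0 : ℝ) : ℂ))
        = fun i => ((lam i : ℝ) : ℂ) := by
      funext i
      rw [← Complex.ofReal_sub, max_zero_sub_max_neg_zero_eq_self]
    rw [diagonal_sub, hfn]
  have hPQ : Δ = P - Q := by
    rw [hPdef, hQdef, ← Matrix.sub_mul, ← Matrix.mul_sub, hd, hspec]
  -- traces of P and Q
  have htrP : P.trace = ∑ i, ((max (lam i) 0 : ℝ) : ℂ) := htr _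
  have htrQ : Q.trace = ∑ i, ((max (-lam i) 0 : ℝ) : ℂ) := htr _
  -- trace of Δ is zero
  have htrΔ : Δ.trace = 0 := by
    rw [hΔdef, trace_sub, hρ.2, hσ.2, sub_self]
  -- traceNorm Δ = ∑ |lam i|
  have habs : traceNorm Δ = ∑ i, |lam i| := by
    have hS : (U * diagonal (fun i => ((|lam i| : ℝ) : ℂ)) * star U).PosSemidef :=
      hpsd _ fun i => abs_nonneg _
    have hsq : (U * diagonal (fun i => ((|lam i| : ℝ) : ℂ)) * star U) ^ 2 = Δᴴ * Δ := by
      have hfun : (fun i => ((|lam i| : ℝ) : ℂ)) * (fun i => ((|lam i| : ℝ) : ℂ))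
          = (fun i => ((lam i : ℝ) : ℂ)) * (fun i => ((lam i : ℝ) : ℂ)) := by
        funext i
        simp only [Pi.mul_apply, ← Complex.ofReal_mul, abs_mul_abs_self]
      rw [hΔ.eq, pow_two, hmul, hfun]
      conv_rhs => rw [hspec, hmul]
    rw [traceNorm_eq_of_sq hS (by rw [← pow_two]; exact hsq), htr]
    simp [Complex.re_sum]
  -- sums of positive and negative parts
  have hsum : (∑ i, max (lam i) 0) + (∑ i, max (-lam i) 0) = ∑ i, |lam i| := by
    rw [← Finset.sum_add_distrib]
    congr 1; funext i
    rcases le_total (lam i) 0 with h | h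
    · rw [max_eq_right h, max_eq_left (by linarith), abs_of_nonpos h]; ring
    · rw [max_eq_left h, max_eq_right (by linarith), abs_of_nonneg h]; ring
  have hsumeq : (∑ i, max (lam i) 0) = (∑ i, max (-lam i) 0) := by
    have h0 : P.trace - Q.trace = 0 := by rw [← trace_sub, ← hPQ, htrΔ]
    rw [htrP, htrQ] at h0
    have h0' := sub_eq_zero.mp h0
    exact_mod_cast h0'
  have htrPval : P.trace.re = (1 / 2) * traceNorm Δ := by
    rw [htrP, habs]
    simp only [Complex.re_sum, Complex.ofReal_re]
    linarith [hsum, hsumeq]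
  have htrQval : Q.trace.re = (1 / 2) * traceNorm Δ := by
    rw [htrQ, habs]
    simp only [Complex.re_sum, Complex.ofReal_re]
    linarith [hsum, hsumeq]
  -- bounds on tr(M X Mᴴ) for X PSD
  have key : ∀ X : Matrix d d ℂ, X.PosSemidef →
      0 ≤ ((M * X * Mᴴ).trace).re ∧ ((M * X * Mᴴ).trace).re ≤ X.trace.re := by
    intro X hX
    constructor
    · exact (psd_trace_nonneg (hX.mul_mul_conjTranspose_same M)).1
    · have h1 : (M * X * Mᴴ).trace = (Mᴴ * M * X).trace := by
        rw [Matrix.trace_mul_cycle]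
      have h2 : 0 ≤ ((1 - Mᴴ * M) * X).trace := psd_mul_trace_nonneg hM hX
      have h3 : ((1 - Mᴴ * M) * X).trace = X.trace - (Mᴴ * M * X).trace := by
        rw [Matrix.sub_mul, trace_sub, one_mul]
      rw [h1]
      have h4 := h2.1
      rw [h3] at h4
      simp only [Complex.sub_re, Complex.zero_re] at h4
      linarith
  have hMP := key P hP
  have hMQ := key Q hQ
  -- split the trace
  have hsplit : ((M * ρ * Mᴴ).trace).re - ((M * σ * Mᴴ).trace).re
      = ((M * P * Mᴴ).trace).re - ((M * Q * Mᴴ).trace).re := by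
    have h : M * ρ * Mᴴ - M * σ * Mᴴ = M * P * Mᴴ - M * Q * Mᴴ := by
      rw [← Matrix.sub_mul, ← Matrix.mul_sub, ← hΔdef, hPQ, Matrix.mul_sub, Matrix.sub_mul]
    have h' := congrArg (fun A => (Matrix.trace A).re) h
    simp only [trace_sub, Complex.sub_re] at h'
    linarith [h']
  rw [hsplit, abs_sub_le_iff]
  constructor
  · linarith [hMP.2, hMQ.1, htrPval]
  · linarith [hMQ.2, hMP.1, htrQval]
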